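/- Let X ⊆ X' with X, X' ∈ 𝓘, let i ∉ X' be such that X' ∪ {i} ∈ 𝓘 and |X' ∪ {i}| ≤ r. Then the function Y ↦ f_r(Y) has the diminishing-differences (submodularity) property: f_r(X) − f_r(X ∪ {i}) ≤ f_r(X') − f_r(X' ∪ {i}). -/
import Mathlib


open Finset

/-- `Y` is feasible for `(X, r)`: it is disjoint from `X`, `X ∪ Y` is independent in the
matroid `M`, and `|X ∪ Y| ≤ r`. -/
def MatroidFeasible {α : Type*} [DecidableEq α] (M : Matroid α) (r : ℕ)
    (X Y : Finset α) : Prop :=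
  Disjoint X Y ∧ M.Indep ↑(X ∪ Y) ∧ (X ∪ Y).card ≤ r

/-- `truncOpt M w r X = f_r(X)`: the maximum weight `w(Y)` over all sets `Y` feasible for
`(X, r)`, i.e. the weight of a maximum-weight basis of the matroid contracted by `X` and
truncated at rank `r`. -/
noncomputable def truncOpt {α : Type*} [DecidableEq α] (M : Matroid α) (w : α → ℝ)
    (r : ℕ) (X : Finset α) : ℝ :=
  sSup {t : ℝ | ∃ Y : Finset α, MatroidFeasible M r X Y ∧ t = ∑ e ∈ Y, w e}

section Aux

variable {α : Type*} [DecidableEq α]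

lemma truncOpt_valueSet_finite [Fintype α] (M : Matroid α) (w : α → ℝ) (r : ℕ) (X : Finset α) :
    {t : ℝ | ∃ Y : Finset α, MatroidFeasible M r X Y ∧ t = ∑ e ∈ Y, w e}.Finite := by
  apply (Set.finite_range (fun Y : Finset α => ∑ e ∈ Y, w e)).subset
  rintro t ⟨Y, -, rfl⟩
  exact ⟨Y, rfl⟩

lemma le_truncOpt [Fintype α] {M : Matroid α} {w : α → ℝ} {r : ℕ} {X Y : Finset α}
    (hY : MatroidFeasible M r X Y) : ∑ e ∈ Y, w e ≤ truncOpt M w r X :=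
  le_csSup (truncOpt_valueSet_finite M w r X).bddAbove ⟨Y, hY, rfl⟩

lemma truncOpt_exists [Fintype α] {M : Matroid α} (w : α → ℝ) {r : ℕ} {X : Finset α}
    (hX : M.Indep ↑X) (hXr : X.card ≤ r) :
    ∃ Y : Finset α, MatroidFeasible M r X Y ∧ truncOpt M w r X = ∑ e ∈ Y, w e := by
  have hne : {t : ℝ | ∃ Y : Finset α, MatroidFeasible M r X Y ∧ t = ∑ e ∈ Y, w e}.Nonempty := by
    refine ⟨∑ e ∈ (∅ : Finset α), w e, ∅, ⟨disjoint_empty_right _, ?_, ?_⟩, rfl⟩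
    · simpa using hX
    · simpa using hXr
  exact hne.csSup_mem (truncOpt_valueSet_finite M w r X)

/-- Every set spanning `i` contains a minimal subset spanning `i`. -/
lemma exists_minimal_spanning (M : Matroid α) (i : α) :
    ∀ S : Finset α, i ∈ M.closure ↑S →
      ∃ C ⊆ S, i ∈ M.closure ↑C ∧ ∀ e ∈ C, i ∉ M.closure ↑(C.erase e) := by
  intro S
  induction S using Finset.strongInduction with
  | _ S ih =>
    intro h
    by_cases hall : ∀ e ∈ S, i ∉ M.closure ↑(S.erase e)
    · exact ⟨S, subset_rfl, h, hall⟩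
    · push_neg at hall
      obtain ⟨e, heS, he⟩ := hall
      obtain ⟨C, hCS, h1, h2⟩ := ih (S.erase e) (Finset.erase_ssubset heS) he
      exact ⟨C, hCS.trans (Finset.erase_subset _ _), h1, h2⟩

/-- "Fundamental circuit" exchange: if `C ⊆ S` is a minimal set spanning `i` and `e ∈ C`,
then `insert i (S.erase e)` is independent. -/
lemma insert_erase_indep {M : Matroid α} {S C : Finset α} {i e : α}
    (hS : M.Indep ↑S) (hiS : i ∉ S) (hiE : i ∈ M.E)
    (hCS : C ⊆ S) (hiC : i ∈ M.closure ↑C) (hmin : ∀ e ∈ C, i ∉ M.closure ↑(C.erase e))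
    (he : e ∈ C) : M.Indep ↑(insert i (S.erase e)) := by
  have heS : e ∈ S := hCS he
  have hSe : M.Indep ↑(S.erase e) := by
    rw [Finset.coe_erase]
    exact hS.subset Set.diff_subset
  by_contra hdep
  rw [Finset.coe_insert] at hdep
  have hiSe' : i ∉ (↑(S.erase e) : Set α) := by
    simp only [Finset.coe_erase, Set.mem_diff, Finset.mem_coe]
    intro h; exact hiS h.1
  have hiSe : i ∈ M.closure ↑(S.erase e) := by
    rw [hSe.insert_indep_iff_of_notMem hiSe'] at hdep
    simp only [Set.mem_diff, not_and, not_not] at hdep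
    exact hdep hiE
  have hx : i ∈ M.closure (insert e ↑(C.erase e)) \ M.closure ↑(C.erase e) := by
    constructor
    · have : insert e (↑(C.erase e) : Set α) = ↑C := by
        rw [Finset.coe_erase, Set.insert_diff_singleton, Set.insert_eq_of_mem (by exact he)]
      rw [this]; exact hiC
    · exact hmin e he
  have hex : e ∈ M.closure (insert i ↑(C.erase e)) := (Matroid.closure_exchange hx).1
  have hsub : insert i (↑(C.erase e) : Set α) ⊆ insert i ↑(S.erase e) :=
    Set.insert_subset_insert (by exact_mod_cast Finset.erase_subset_erase e hCS)
  have hfin : e ∈ M.closure (insert i ↑(S.erase e)) := M.closure_subset_closure hsub hex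
  rw [Matroid.closure_insert_eq_of_mem_closure hiSe] at hfin
  rw [Finset.coe_erase] at hfin
  exact hS.notMem_closure_diff_of_mem (by exact_mod_cast heS) hfin

/-- Key exchange lemma. -/
lemma key_exchange {M : Matroid α} {w : α → ℝ} {r : ℕ} {X X' S T : Finset α} {i : α}
    (hXX : X ⊆ X') (hiX' : i ∉ X')
    (hS : M.Indep ↑S) (hT : M.Indep ↑T) (hXS : X ⊆ S) (hX'T : insert i X' ⊆ T)
    (hSr : S.card ≤ r) (hTr : T.card ≤ r) :
    ∃ S' T' : Finset α, M.Indep ↑S' ∧ M.Indep ↑T' ∧ insert i X ⊆ S' ∧ X' ⊆ T' ∧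
      S'.card ≤ r ∧ T'.card ≤ r ∧
      ∑ e ∈ S, w e + ∑ e ∈ T, w e ≤ ∑ e ∈ S', w e + ∑ e ∈ T', w e := by
  have hiT : i ∈ T := hX'T (Finset.mem_insert_self i X')
  have hX'Tsub : X' ⊆ T := fun x hx => hX'T (Finset.mem_insert_of_mem hx)
  have hXT : X ⊆ T := hXX.trans hX'Tsub
  have hiX : i ∉ X := fun h => hiX' (hXX h)
  by_cases hiS : i ∈ S
  · exact ⟨S, T, hS, hT, Finset.insert_subset hiS hXS, hX'Tsub, hSr, hTr, le_refl _⟩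
  -- a helper for the swap construction
  have swap : ∀ e : α, e ∈ S → e ∉ T → M.Indep ↑(insert i (S.erase e)) →
      M.Indep ↑(insert e (T.erase i)) →
      ∃ S' T' : Finset α, M.Indep ↑S' ∧ M.Indep ↑T' ∧ insert i X ⊆ S' ∧ X' ⊆ T' ∧
        S'.card ≤ r ∧ T'.card ≤ r ∧
        ∑ x ∈ S, w x + ∑ x ∈ T, w x ≤ ∑ x ∈ S', w x + ∑ x ∈ T', w x := by
    intro e heS heT hS' hT'
    have heX : e ∉ X := fun h => heT (hXT h)
    refine ⟨insert i (S.erase e), insert e (T.erase i), hS', hT', ?_, ?_, ?_, ?_, ?_⟩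
    · exact Finset.insert_subset_insert i (Finset.subset_erase.mpr ⟨hXS, heX⟩)
    · exact (Finset.subset_erase.mpr ⟨hX'Tsub, hiX'⟩).trans (Finset.subset_insert _ _)
    · calc (insert i (S.erase e)).card ≤ (S.erase e).card + 1 := Finset.card_insert_le _ _
        _ = S.card := Finset.card_erase_add_one heS
        _ ≤ r := hSr
    · calc (insert e (T.erase i)).card ≤ (T.erase i).card + 1 := Finset.card_insert_le _ _
        _ = T.card := Finset.card_erase_add_one hiT
        _ ≤ r := hTr
    · have h1 : ∑ x ∈ insert i (S.erase e), w x = w i + (∑ x ∈ S, w x - w e) := by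
        rw [Finset.sum_insert (fun h => hiS (Finset.mem_of_mem_erase h)),
          Finset.sum_erase_eq_sub heS]
      have h2 : ∑ x ∈ insert e (T.erase i), w x = w e + (∑ x ∈ T, w x - w i) := by
        rw [Finset.sum_insert (fun h => heT (Finset.mem_of_mem_erase h)),
          Finset.sum_erase_eq_sub hiT]
      rw [h1, h2]; ring_nf; exact le_refl _
  by_cases hind : M.Indep ↑(insert i S)
  · by_cases hc2 : S.card + 1 ≤ T.card
    · refine ⟨insert i S, T.erase i, hind, ?_, Finset.insert_subset_insert i hXS,
        Finset.subset_erase.mpr ⟨hX'Tsub, hiX'⟩, ?_, ?_, ?_⟩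
      · rw [Finset.coe_erase]; exact hT.subset Set.diff_subset
      · rw [Finset.card_insert_of_notMem hiS]; exact hc2.trans hTr
      · exact (Finset.card_le_card (Finset.erase_subset _ _)).trans hTr
      · rw [Finset.sum_insert hiS, Finset.sum_erase_eq_sub hiT]
        ring_nf; exact le_refl _
    · push_neg at hc2
      have hlt : (↑T : Set α).encard < (↑(insert i S) : Set α).encard := by
        rw [Set.encard_coe_eq_coe_finsetCard, Set.encard_coe_eq_coe_finsetCard,
          Finset.card_insert_of_notMem hiS]
        exact_mod_cast hc2
      obtain ⟨e, he, hTe⟩ := hT.augment hind hlt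
      have hei : e ≠ i := fun h => he.2 (h ▸ (by exact_mod_cast hiT))
      have heS : e ∈ S := by
        have : e ∈ (↑(insert i S) : Set α) := he.1
        rw [Finset.coe_insert] at this
        rcases this with h | h
        · exact absurd h hei
        · exact_mod_cast h
      have heT : e ∉ T := fun h => he.2 (by exact_mod_cast h)
      refine swap e heS heT ?_ ?_
      · refine hind.subset ?_
        exact_mod_cast Finset.insert_subset_insert i (Finset.erase_subset _ _)
      · refine hTe.subset ?_
        rw [Finset.coe_insert]
        exact Set.insert_subset_insert (by
          rw [Finset.coe_erase]; exact Set.diff_subset)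
  · -- `insert i S` dependent : `i ∈ closure S`
    have hiE : i ∈ M.E := hT.subset_ground (by exact_mod_cast hiT)
    have hicl : i ∈ M.closure ↑S := by
      rw [Finset.coe_insert, hS.insert_indep_iff_of_notMem (by exact_mod_cast hiS)] at hind
      simp only [Set.mem_diff, not_and, not_not] at hind
      exact hind hiE
    obtain ⟨C, hCS, hiC, hmin⟩ := exists_minimal_spanning M i S hicl
    have hTei : M.Indep ↑(T.erase i) := by
      rw [Finset.coe_erase]; exact hT.subset Set.diff_subset
    have hexists : ∃ e ∈ C, e ∉ M.closure ↑(T.erase i) := by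
      by_contra h
      push_neg at h
      have hsub : (↑C : Set α) ⊆ M.closure ↑(T.erase i) := fun x hx => h x (by exact_mod_cast hx)
      have : i ∈ M.closure ↑(T.erase i) :=
        (Matroid.closure_subset_closure_of_subset_closure hsub) hiC
      rw [Finset.coe_erase] at this
      exact hT.notMem_closure_diff_of_mem (by exact_mod_cast hiT) this
    obtain ⟨e, heC, hecl⟩ := hexists
    have heS : e ∈ S := hCS heC
    have hei : e ≠ i := fun h => hiS (h ▸ heS)
    have heT : e ∉ T := by
      intro h
      apply hecl
      apply M.subset_closure ↑(T.erase i) (by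
        rw [Finset.coe_erase]; exact Set.diff_subset.trans hT.subset_ground)
      rw [Finset.coe_erase]
      exact ⟨by exact_mod_cast h, by simpa using hei⟩
    refine swap e heS heT ?_ ?_
    · exact insert_erase_indep hS hiS hiE hCS hiC hmin heC
    · rw [Finset.coe_insert]
      rw [hTei.insert_indep_iff_of_notMem (by
        simp only [Finset.coe_erase, Set.mem_diff, Finset.mem_coe]
        intro h; exact heT h.1)]
      exact ⟨hS.subset_ground (by exact_mod_cast heS), hecl⟩

end Aux

/-- Diminishing differences (submodularity) of `X ↦ f_r(X)`: for independent `X ⊆ X'`,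
`i ∉ X'` with `X' ∪ {i}` independent and `|X' ∪ {i}| ≤ r`, we have
`f_r(X) − f_r(X ∪ {i}) ≤ f_r(X') − f_r(X' ∪ {i})`. -/
theorem truncOpt_submodular
    {α : Type*} [DecidableEq α] [Fintype α] (M : Matroid α) (w : α → ℝ)
    (hw : ∀ e, 0 ≤ w e) (r : ℕ)
    (X X' : Finset α) (hXX : X ⊆ X') (hX : M.Indep ↑X) (hX' : M.Indep ↑X')
    (i : α) (hiX' : i ∉ X') (hX'i : M.Indep ↑(insert i X'))
    (hcard : (insert i X').card ≤ r) :
    truncOpt M w r X - truncOpt M w r (insert i X) ≤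
      truncOpt M w r X' - truncOpt M w r (insert i X') := by
  have hiX : i ∉ X := fun h => hiX' (hXX h)
  have hXr : X.card ≤ r :=
    ((Finset.card_le_card hXX).trans (Finset.card_le_card (Finset.subset_insert _ _))).trans hcard
  have hX'r : X'.card ≤ r :=
    (Finset.card_le_card (Finset.subset_insert _ _)).trans hcard
  -- optimal solution A for X
  obtain ⟨A, hA, hAval⟩ := truncOpt_exists w hX hXr
  -- optimal solution B for insert i X'
  obtain ⟨B, hB, hBval⟩ := truncOpt_exists w hX'i hcard
  set S := X ∪ A with hSdef
  set T := (insert i X') ∪ B with hTdef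
  obtain ⟨hAd, hSind, hSr⟩ := hA
  obtain ⟨hBd, hTind, hTr⟩ := hB
  have hiT : insert i X' ⊆ T := Finset.subset_union_left
  obtain ⟨S', T', hS'ind, hT'ind, hS'sub, hT'sub, hS'r, hT'r, hsum⟩ :=
    key_exchange (M := M) (w := w) (r := r) hXX hiX' hSind hTind Finset.subset_union_left hiT
      hSr hTr
  -- feasible solutions from S' and T'
  have hY1 : MatroidFeasible M r (insert i X) (S' \ insert i X) := by
    refine ⟨Finset.disjoint_sdiff, ?_, ?_⟩ <;>
      rw [Finset.union_sdiff_of_subset hS'sub]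
    · exact hS'ind
    · exact hS'r
  have hY2 : MatroidFeasible M r X' (T' \ X') := by
    refine ⟨Finset.disjoint_sdiff, ?_, ?_⟩ <;> rw [Finset.union_sdiff_of_subset hT'sub]
    · exact hT'ind
    · exact hT'r
  have h1 : ∑ e ∈ S' \ insert i X, w e ≤ truncOpt M w r (insert i X) := le_truncOpt hY1
  have h2 : ∑ e ∈ T' \ X', w e ≤ truncOpt M w r X' := le_truncOpt hY2
  -- sum identities
  have hs1 : ∑ e ∈ S' \ insert i X, w e + ∑ e ∈ insert i X, w e = ∑ e ∈ S', w e :=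
    by rw [Finset.sum_sdiff_eq_sub hS'sub]; ring
  have hs2 : ∑ e ∈ T' \ X', w e + ∑ e ∈ X', w e = ∑ e ∈ T', w e := by
    rw [Finset.sum_sdiff_eq_sub hT'sub]; ring
  have hsS : ∑ e ∈ S, w e = ∑ e ∈ X, w e + ∑ e ∈ A, w e := Finset.sum_union hAd
  have hsT : ∑ e ∈ T, w e = ∑ e ∈ insert i X', w e + ∑ e ∈ B, w e := Finset.sum_union hBd
  have hiXsum : ∑ e ∈ insert i X, w e = w i + ∑ e ∈ X, w e := Finset.sum_insert hiX
  have hiX'sum : ∑ e ∈ insert i X', w e = w i + ∑ e ∈ X', w e := Finset.sum_insert hiX'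
  rw [hAval, hBval]
  linarith
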